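/- For the paperfolding word, the abelian complexity satisfies ρ(n) = M(n) + 1 for all n ≥ 1, where M(n) is the maximum of |u|_0 − |u|_1 over length-n factors u. -/

import Mathlib

/-- letter of the ordinary paperfolding word at position `m` (positions start at 1):
writing `m = k * 2^j` with `k` odd, the letter is `0` if `k ≡ 1 (mod 4)` and `1` otherwise. -/
def pf (m : ℕ) : ℕ := if (m / 2 ^ (padicValNat 2 m)) % 4 = 1 then 0 else 1

/-- the length-`n` factor of `w` starting at position `i`. -/
def factorAt (w : ℕ → ℕ) (i n : ℕ) : List ℕ := (List.range n).map (fun j => w (i + j))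

/-- `u` is a factor of the 1-indexed infinite word `w`. -/
def IsFactor (w : ℕ → ℕ) (u : List ℕ) : Prop := ∃ i ≥ 1, u = factorAt w i u.length

namespace PFP

/-- the `±1` weight of the letter at position `m`. -/
def F (m : ℕ) : ℤ := 1 - 2 * pf m

lemma F_cases (m : ℕ) : F m = 1 ∨ F m = -1 := by
  unfold F pf; split <;> simp

/-- sum of weights over the window of length `n` starting at position `i + 1`. -/
def g (n i : ℕ) : ℤ := ∑ j ∈ Finset.range n, F (i + 1 + j)

lemma g_succ (n i : ℕ) : g (n + 1) i = g n i + F (i + 1 + n) := by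
  unfold g; rw [Finset.sum_range_succ]

lemma g_bound (n i : ℕ) : |g n i| ≤ n := by
  calc |g n i| ≤ ∑ j ∈ Finset.range n, |F (i + 1 + j)| := Finset.abs_sum_le_sum_abs _ _
    _ ≤ ∑ _j ∈ Finset.range n, 1 := by
        apply Finset.sum_le_sum
        intro j _
        rcases F_cases (i + 1 + j) with h | h <;> simp [h]
    _ = n := by simp

lemma g_shift (n i : ℕ) : g n (i + 1) + F (i + 1) = g n i + F (i + 1 + n) := by
  have h1 := Finset.sum_range_succ' (fun j => F (i + 1 + j)) n
  have h2 := Finset.sum_range_succ (fun j => F (i + 1 + j)) n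
  have h3 : ∀ j, F (i + 1 + (j + 1)) = F (i + 1 + 1 + j) := by
    intro j; congr 1; omega
  simp only [h3] at h1
  unfold g
  simp only [add_zero] at h1
  rw [← h1, h2]

lemma g_step (n i : ℕ) : g n (i + 1) ≤ g n i + 2 ∧ g n i ≤ g n (i + 1) + 2 := by
  have h := g_shift n i
  rcases F_cases (i + 1) with h1 | h1 <;> rcases F_cases (i + 1 + n) with h2 | h2 <;>
    rw [h1, h2] at h <;> constructor <;> linarith

lemma g_parity (n i : ℕ) : Even (g n i + n) := by
  induction n with
  | zero => simp [g]
  | succ n ih =>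
    rw [g_succ]
    obtain ⟨c, hc⟩ := ih
    rcases F_cases (i + 1 + n) with h | h <;> rw [h] <;> push_cast
    · exact ⟨c + 1, by linarith⟩
    · exact ⟨c, by linarith⟩

lemma g_parity' (n a b : ℕ) : Even (g n a - g n b) := by
  obtain ⟨c, hc⟩ := g_parity n a
  obtain ⟨d, hd⟩ := g_parity n b
  exact ⟨c - d, by linarith⟩

/-- discrete intermediate value theorem for walks whose steps increase by at most `2`
and whose values all have the same parity -/
lemma ivt (h : ℕ → ℤ) (hstep : ∀ i, h (i + 1) ≤ h i + 2)
    (hpar : ∀ a b, Even (h a - h b)) (a b : ℕ) (hab : a ≤ b) (d : ℤ)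
    (h1 : h a ≤ d) (h2 : d ≤ h b) (hd : Even (d - h a)) : ∃ c, h c = d := by
  induction b, hab using Nat.le_induction with
  | base => exact ⟨a, le_antisymm h1 h2⟩
  | succ b hab ih =>
    by_cases hc : d ≤ h b
    · exact ih hc
    · push_neg at hc
      refine ⟨b + 1, ?_⟩
      have hs := hstep b
      obtain ⟨c1, hc1⟩ := hd
      obtain ⟨c2, hc2⟩ := hpar b a
      obtain ⟨c3, hc3⟩ := hpar (b + 1) b
      omega

/-- reflection: for `0 < m < 2^e`, the letter at position `2^(e+1) - m` is the complement
of the letter at position `m`. -/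
lemma pf_reflect {e m : ℕ} (h0 : 0 < m) (hm : m < 2 ^ e) :
    pf (2 ^ (e + 1) - m) = 1 - pf m := by
  haveI : Fact (Nat.Prime 2) := ⟨Nat.prime_two⟩
  set j := padicValNat 2 m with hj
  set k := m / 2 ^ j with hkdef
  have hdvd : 2 ^ j ∣ m := pow_padicValNat_dvd
  have hmk : 2 ^ j * k = m := Nat.mul_div_cancel' hdvd
  have hkodd : ¬ 2 ∣ k := by
    intro ⟨c, hc⟩
    exact pow_succ_padicValNat_not_dvd (p := 2) h0.ne'
      ⟨c, by rw [pow_succ, mul_assoc, ← hc, hmk]⟩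
  have hjlt : j < e := by
    have h1 : 2 ^ j ≤ m := Nat.le_of_dvd h0 hdvd
    exact (Nat.pow_lt_pow_iff_right one_lt_two).mp (lt_of_le_of_lt h1 hm)
  have hklt : k < 2 ^ (e + 1 - j) := by
    have h2 : 2 ^ j * k < 2 ^ j * 2 ^ (e + 1 - j) := by
      rw [← pow_add, hmk]
      have : j + (e + 1 - j) = e + 1 := by omega
      rw [this]
      calc m < 2 ^ e := hm
        _ ≤ 2 ^ (e + 1) := Nat.pow_le_pow_right (by norm_num) (by omega)
    exact lt_of_mul_lt_mul_left h2 (Nat.zero_le _)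
  set k' := 2 ^ (e + 1 - j) - k with hk'
  have h4dvd : (4 : ℕ) ∣ 2 ^ (e + 1 - j) := by
    have : (4 : ℕ) = 2 ^ 2 := by norm_num
    rw [this]
    exact pow_dvd_pow 2 (by omega)
  have hk'odd : ¬ 2 ∣ k' := by
    have : (2 : ℕ) ∣ 2 ^ (e + 1 - j) := dvd_pow_self 2 (by omega)
    omega
  have hk'pos : 0 < k' := by omega
  have hsub : 2 ^ (e + 1) - m = 2 ^ j * k' := by
    have : 2 ^ j * 2 ^ (e + 1 - j) = 2 ^ (e + 1) := by
      rw [← pow_add]; congr 1; omega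
    rw [hk', Nat.mul_sub, this, hmk]
  have hval : padicValNat 2 (2 ^ (e + 1) - m) = j := by
    rw [hsub, padicValNat.mul (by positivity) (by omega), padicValNat.prime_pow,
      padicValNat.eq_zero_of_not_dvd hk'odd, add_zero]
  have hquot : (2 ^ (e + 1) - m) / 2 ^ padicValNat 2 (2 ^ (e + 1) - m) = k' := by
    rw [hval, hsub, Nat.mul_div_cancel_left _ (by positivity)]
  have hq2 : m / 2 ^ padicValNat 2 m = k := rfl
  unfold pf
  rw [hquot, hq2]
  obtain ⟨c, hc⟩ := h4dvd
  have hkmod : k % 2 = 1 := by omega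
  have : k' % 4 + k % 4 = 4 := by omega
  split <;> split <;> omega

lemma F_reflect {e m : ℕ} (h0 : 0 < m) (hm : m < 2 ^ e) :
    F (2 ^ (e + 1) - m) = - F m := by
  have h1 := pf_reflect h0 hm
  have h2 : pf m ≤ 1 := by unfold pf; split <;> simp
  unfold F
  rw [h1]
  have : pf m = 0 ∨ pf m = 1 := by omega
  rcases this with h | h <;> rw [h] <;> norm_num

/-- abelian symmetry: every window sum is matched by a window sum of opposite sign. -/
lemma g_neg (n i : ℕ) : ∃ i', g n i' = - g n i := by
  set p := i + 1 with hp
  set e := p + n with he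
  have hlt : p + n - 1 < 2 ^ e := by
    have h := Nat.lt_two_pow_self (n := e)
    omega
  have hpow : 2 ^ (e + 1) = 2 * 2 ^ e := by rw [pow_succ]; ring
  set p' := 2 ^ (e + 1) - (p + n - 1) with hp'
  have hp'1 : 1 ≤ p' := by omega
  refine ⟨p' - 1, ?_⟩
  have key : ∀ j ∈ Finset.range n, F (p' - 1 + 1 + j) = - F (p + (n - 1 - j)) := by
    intro j hj
    simp only [Finset.mem_range] at hj
    have h1 : p' - 1 + 1 + j = 2 ^ (e + 1) - (p + (n - 1 - j)) := by omega
    rw [h1]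
    apply F_reflect (by omega) (by omega)
  calc g n (p' - 1) = ∑ j ∈ Finset.range n, - F (p + (n - 1 - j)) :=
        Finset.sum_congr rfl key
    _ = - ∑ j ∈ Finset.range n, F (p + (n - 1 - j)) := by rw [Finset.sum_neg_distrib]
    _ = - ∑ j ∈ Finset.range n, F (p + j) := by
        rw [Finset.sum_range_reflect (fun j => F (p + j)) n]
    _ = - g n i := rfl

lemma list_count (l : List ℕ) (h : ∀ x ∈ l, x ≤ 1) :
    l.count 0 + l.count 1 = l.length ∧
      (l.count 0 : ℤ) - l.count 1 = (l.map (fun a : ℕ => 1 - 2 * (a : ℤ))).sum := by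
  induction l with
  | nil => simp
  | cons a t ih =>
    have ha : a = 0 ∨ a = 1 := by have := h a (by simp); omega
    obtain ⟨ih1, ih2⟩ := ih (fun x hx => h x (by simp [hx]))
    rcases ha with rfl | rfl <;>
        simp only [List.count_cons, List.map_cons, List.sum_cons, List.length_cons] <;>
        constructor <;> simp <;> omega

lemma list_range_sum (f : ℕ → ℤ) (n : ℕ) :
    ((List.range n).map f).sum = ∑ j ∈ Finset.range n, f j := by
  induction n with
  | zero => simp
  | succ n ih => rw [List.range_succ, Finset.sum_range_succ]; simp [ih]

lemma factor_count (i n : ℕ) (hi : 1 ≤ i) :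
    (factorAt pf i n).count 0 + (factorAt pf i n).count 1 = n ∧
      ((factorAt pf i n).count 0 : ℤ) - (factorAt pf i n).count 1 = g n (i - 1) := by
  have hle : ∀ x ∈ factorAt pf i n, x ≤ 1 := by
    intro x hx
    simp only [factorAt, List.mem_map] at hx
    obtain ⟨j, _, rfl⟩ := hx
    unfold pf; split <;> simp
  obtain ⟨h1, h2⟩ := list_count (factorAt pf i n) hle
  refine ⟨by simpa [factorAt] using h1, ?_⟩
  rw [h2]
  unfold factorAt g
  rw [List.map_map, list_range_sum]
  apply Finset.sum_congr rfl
  intro j _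
  simp only [Function.comp]
  rw [show i - 1 + 1 + j = i + j from by omega]
  rfl

lemma factorAt_length (i n : ℕ) : (factorAt pf i n).length = n := by simp [factorAt]

end PFP

open PFP in
/-- For the paperfolding word, the abelian complexity `ρ(n)` equals `M(n) + 1`, where
`M(n)` is the maximum of `|u|₀ - |u|₁` over length-`n` factors `u`. -/
theorem paperfolding_rho_eq_M_add_one (n : ℕ) (hn : 1 ≤ n) :
    ({p : ℕ × ℕ | ∃ u : List ℕ, IsFactor pf u ∧ u.length = n ∧
        p = (u.count 0, u.count 1)}.ncard : ℤ)
      = sSup {d : ℤ | ∃ u : List ℕ, IsFactor pf u ∧ u.length = n ∧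
          d = (u.count 0 : ℤ) - (u.count 1 : ℤ)} + 1 := by
  classical
  set P : Set (ℕ × ℕ) := {p : ℕ × ℕ | ∃ u : List ℕ, IsFactor pf u ∧ u.length = n ∧
      p = (u.count 0, u.count 1)} with hP
  set Dt : Set ℤ := {d : ℤ | ∃ u : List ℕ, IsFactor pf u ∧ u.length = n ∧
      d = (u.count 0 : ℤ) - (u.count 1 : ℤ)} with hDtdef
  -- `Dt` is the range of the window-sum function `g n`
  have hDt : Dt = Set.range (g n) := by
    ext d
    constructor
    · rintro ⟨u, ⟨i, hi, hu⟩, hlen, hd⟩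
      rw [hlen] at hu
      refine ⟨i - 1, ?_⟩
      rw [hd, hu]
      exact (factor_count i n hi).2.symm
    · rintro ⟨i, rfl⟩
      refine ⟨factorAt pf (i + 1) n, ⟨i + 1, by omega, ?_⟩, factorAt_length _ _, ?_⟩
      · rw [factorAt_length]
      · have h := (factor_count (i + 1) n (by omega)).2
        simpa using h.symm
  -- `Dt` is the image of `P` under taking `count 0 - count 1`
  have himg : (fun p : ℕ × ℕ => (p.1 : ℤ) - p.2) '' P = Dt := by
    ext d
    constructor
    · rintro ⟨p, ⟨u, hu, hlen, rfl⟩, rfl⟩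
      exact ⟨u, hu, hlen, rfl⟩
    · rintro ⟨u, hu, hlen, rfl⟩
      exact ⟨(u.count 0, u.count 1), ⟨u, hu, hlen, rfl⟩, rfl⟩
  -- points of `P` lie on the line `x + y = n`
  have hline : ∀ p ∈ P, p.1 + p.2 = n := by
    rintro p ⟨u, ⟨i, hi, hu⟩, hlen, rfl⟩
    rw [hlen] at hu
    rw [hu]
    exact (factor_count i n hi).1
  have hinj : Set.InjOn (fun p : ℕ × ℕ => (p.1 : ℤ) - p.2) P := by
    intro p hp q hq h
    have h1 := hline p hp
    have h2 := hline q hq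
    simp only at h
    have : p.1 = q.1 ∧ p.2 = q.2 := by omega
    exact Prod.ext this.1 this.2
  have hPcard : P.ncard = Dt.ncard := by
    rw [← himg, Set.ncard_image_of_injOn hinj]
  -- basic structure of the set of window sums
  have hfin : Dt.Finite := by
    apply (Set.finite_Icc (-(n : ℤ)) n).subset
    rw [hDt]
    rintro d ⟨i, rfl⟩
    have := g_bound n i
    rw [Set.mem_Icc]
    constructor <;> [linarith [(abs_le.mp this).1]; linarith [(abs_le.mp this).2]]
  have hne : Dt.Nonempty := by
    rw [hDt]; exact ⟨g n 0, 0, rfl⟩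
  set M : ℤ := sSup Dt with hM
  have hMmem : M ∈ Dt := hne.csSup_mem hfin
  have hub : ∀ d ∈ Dt, d ≤ M := fun d hd => le_csSup hfin.bddAbove hd
  have hsym : ∀ d ∈ Dt, -d ∈ Dt := by
    rw [hDt]
    rintro d ⟨i, rfl⟩
    obtain ⟨i', hi'⟩ := g_neg n i
    exact ⟨i', hi'⟩
  have hM0 : 0 ≤ M := by
    have := hub _ (hsym _ hMmem)
    linarith
  have hnegM : -M ∈ Dt := hsym _ hMmem
  -- characterization of `Dt`
  have hchar : ∀ d : ℤ, d ∈ Dt ↔ (-M ≤ d ∧ d ≤ M ∧ Even (M - d)) := by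
    intro d
    constructor
    · intro hd
      refine ⟨by linarith [hub _ (hsym _ hd)], hub _ hd, ?_⟩
      rw [hDt] at hd hMmem
      obtain ⟨a, ha⟩ := hd
      obtain ⟨b, hb⟩ := hMmem
      rw [← ha, ← hb]
      exact g_parity' n b a
    · rintro ⟨h1, h2, c, hc⟩
      rw [hDt] at hnegM hMmem ⊢
      obtain ⟨a, ha⟩ := hnegM
      obtain ⟨b, hb⟩ := hMmem
      rcases le_total a b with hab | hab
      · exact ivt (g n) (fun i => (g_step n i).1) (g_parity' n) a b hab d
          (by rw [ha]; linarith) (by rw [hb]; linarith)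
          (by rw [ha]; exact ⟨M - c, by linarith⟩)
      · obtain ⟨e', he'⟩ := ivt (fun i => - g n i)
          (fun i => by
            show - g n (i + 1) ≤ - g n i + 2
            have := (g_step n i).2; linarith)
          (fun x y => by
            show Even (- g n x - - g n y)
            obtain ⟨c', hc'⟩ := g_parity' n y x
            exact ⟨c', by linarith⟩)
          b a hab (-d)
          (by show - g n b ≤ -d; rw [hb]; linarith)
          (by show -d ≤ - g n a; rw [ha]; linarith)
          (by show Even (-d - - g n b); rw [hb]; exact ⟨c, by linarith⟩)
        have he2 : - g n e' = -d := he'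
        exact ⟨e', by linarith⟩
  -- `Dt` as an explicit finite set
  have hset : Dt = ↑((Finset.range (M.toNat + 1)).image (fun k : ℕ => M - 2 * (k : ℤ))) := by
    ext d
    rw [hchar d]
    simp only [Finset.coe_image, Finset.coe_range, Set.mem_image, Set.mem_Iio]
    constructor
    · rintro ⟨h1, h2, c, hc⟩
      exact ⟨c.toNat, by omega, by omega⟩
    · rintro ⟨k, hk, rfl⟩
      refine ⟨by omega, by omega, ⟨(k : ℤ), by ring⟩⟩
  have hcard : Dt.ncard = M.toNat + 1 := by
    rw [hset, Set.ncard_coe_finset, Finset.card_image_of_injOn, Finset.card_range]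
    intro a _ b _ hab
    simp only at hab
    omega
  rw [hPcard, hcard]
  omega
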